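/- Let k be a field, and let r ≥ 2 and d ≥ 1 be integers with the characteristic of k not dividing 2rd; set N = rd − 2. In the polynomial ring k[a, b, c₀, …, c_N, s₁, s₂, s₃] (in N + 6 variables), let I₃ be the ideal generated by the three polynomials b²·c_N − s₁^r, a²·c₀ − s₂^r, and (a + b)²·(c₀ + c₁ + ⋯ + c_N) − s₃^r. Then for each i ∈ {1, 2, 3}, the variable sᵢ is a nonzerodivisor modulo I₃: for every polynomial f, if sᵢ·f ∈ I₃ then f ∈ I₃. -/

import Mathlib

universe u

/-! ### Nonzerodivisors modulo an ideal -/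

/-- `x` is a nonzerodivisor modulo the ideal `J`. -/
def NzdMod {A : Type*} [CommRing A] (J : Ideal A) (x : A) : Prop :=
  ∀ y, x * y ∈ J → y ∈ J

lemma NzdMod.of_map_equiv {A B : Type*} [CommRing A] [CommRing B] (e : A ≃+* B)
    {J : Ideal A} {x : A} (h : NzdMod (J.map (e : A →+* B)) (e x)) : NzdMod J x := by
  intro y hy
  have h2 : e x * e y ∈ J.map (e : A →+* B) := by
    rw [← map_mul]; exact Ideal.mem_map_of_mem _ hy
  have h3 := h _ h2
  obtain ⟨z, hz, hzy⟩ := (Ideal.mem_map_iff_of_surjective (e : A →+* B) e.surjective).mp h3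
  rwa [← e.injective hzy]

section PolyLemmas

open Polynomial

variable {B : Type*} [CommRing B]

lemma dvd_of_dvd_X_mul {r : ℕ} (hr : r ≠ 0) {g : B}
    (hg : ∀ c, g * c = 0 → c = 0) {p : B[X]}
    (hdvd : (X ^ r - C g) ∣ X * p) : (X ^ r - C g) ∣ p := by
  nontriviality B
  set f : B[X] := X ^ r - C g with hf
  have hm : f.Monic := monic_X_pow_sub_C g hr
  obtain ⟨q, hq⟩ := hdvd
  have hdecomp := modByMonic_add_div p f
  set p' := p %ₘ f with hp'
  suffices hsuff : p' = 0 by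
    refine ⟨p /ₘ f, ?_⟩
    conv_lhs => rw [← hdecomp, hsuff, zero_add]
  set q' := q - X * (p /ₘ f) with hq'
  have key : p' * X = q' * f := by
    rw [hq']; linear_combination hq + X * hdecomp
  have hdp : p'.degree < f.degree := degree_modByMonic_lt p hm
  have hdf : f.degree = (r : ℕ) := degree_X_pow_sub_C (Nat.pos_of_ne_zero hr) g
  have hdq : q'.degree ≤ 0 := by
    have h1 : (p' * X).degree = p'.degree + 1 := by
      rw [(monic_X (R := B)).degree_mul, degree_X]
    have h2 : (q' * f).degree = q'.degree + (r : ℕ) := by rw [hm.degree_mul, hdf]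
    have h3 : p'.degree + 1 < (r : ℕ) + 1 :=
      WithBot.add_lt_add_right (by simp) (hdf ▸ hdp)
    rw [← h1, key, h2, show ((r : ℕ) : WithBot ℕ) + 1 = 1 + (r : ℕ) by ring] at h3
    rw [← Nat.WithBot.lt_one_iff_le_zero]
    exact (WithBot.add_lt_add_iff_right (by simp)).mp h3
  have hqc : q' = C (q'.coeff 0) := eq_C_of_degree_le_zero hdq
  have hc0 : g * q'.coeff 0 = 0 := by
    have hco := congrArg (fun t => Polynomial.coeff t 0) key
    simp only [mul_coeff_zero, coeff_X_zero, mul_zero, hf, coeff_sub, coeff_X_pow,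
      coeff_C_zero] at hco
    rw [if_neg (fun h => hr h.symm)] at hco
    linear_combination hco
  have hq0 : q' = 0 := by rw [hqc, hg _ hc0, map_zero]
  rw [hq0, zero_mul] at key
  ext n
  have hcn := congrArg (fun t => Polynomial.coeff t (n + 1)) key
  simpa [coeff_mul_X] using hcn

lemma dvd_of_dvd_C_mul {r : ℕ} (hr : r ≠ 0) {g x : B}
    (hx : ∀ c, x * c = 0 → c = 0) {p : B[X]}
    (hdvd : (X ^ r - C g) ∣ C x * p) : (X ^ r - C g) ∣ p := by
  nontriviality B
  set f : B[X] := X ^ r - C g with hf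
  have hm : f.Monic := monic_X_pow_sub_C g hr
  obtain ⟨q, hq⟩ := hdvd
  have hdecomp := modByMonic_add_div p f
  set p' := p %ₘ f with hp'
  suffices hsuff : p' = 0 by
    refine ⟨p /ₘ f, ?_⟩
    conv_lhs => rw [← hdecomp, hsuff, zero_add]
  set q' := q - C x * (p /ₘ f) with hq'
  have key : C x * p' = q' * f := by
    rw [hq']; linear_combination hq + C x * hdecomp
  have hdp : p'.degree < f.degree := degree_modByMonic_lt p hm
  have hq0 : q' = 0 := by
    rw [← degree_eq_bot, ← Nat.WithBot.lt_zero_iff]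
    have h2 : (q' * f).degree = q'.degree + f.degree := hm.degree_mul
    have h4 : (C x * p').degree ≤ p'.degree := by
      calc (C x * p').degree ≤ (C x).degree + p'.degree := degree_mul_le _ _
        _ ≤ 0 + p'.degree := add_le_add (degree_C_le) le_rfl
        _ = p'.degree := by rw [zero_add]
    rw [key, h2] at h4
    have h5 : q'.degree + f.degree < 0 + f.degree := by
      rw [zero_add]; exact lt_of_le_of_lt h4 hdp
    exact (WithBot.add_lt_add_iff_right (by simp [degree_eq_bot, hm.ne_zero])).mp h5
  rw [hq0, zero_mul] at key
  ext n
  have hcn := congrArg (fun t => Polynomial.coeff t n) key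
  simp only [coeff_C_mul, coeff_zero] at hcn
  simpa using hx _ hcn

end PolyLemmas

section SupLemmas

open Polynomial

variable {A : Type*} [CommRing A]

lemma map_mk_eq_zero_iff (J : Ideal A) (u : A[X]) :
    u.map (Ideal.Quotient.mk J) = 0 ↔ u ∈ Ideal.map (C : A →+* A[X]) J := by
  rw [Ideal.mem_map_C_iff, Polynomial.ext_iff]
  constructor
  · intro h n
    have := h n
    rwa [coeff_map, coeff_zero, Ideal.Quotient.eq_zero_iff_mem] at this
  · intro h n
    rw [coeff_map, coeff_zero, Ideal.Quotient.eq_zero_iff_mem]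
    exact h n

lemma mem_sup_iff_dvd_map (J : Ideal A) (g : A) (r : ℕ) (p : A[X]) :
    p ∈ Ideal.map (C : A →+* A[X]) J ⊔ Ideal.span {X ^ r - C g} ↔
      (X ^ r - C (Ideal.Quotient.mk J g)) ∣ p.map (Ideal.Quotient.mk J) := by
  have hfmap : (X ^ r - C g).map (Ideal.Quotient.mk J) =
      X ^ r - C (Ideal.Quotient.mk J g) := by
    simp [Polynomial.map_sub, Polynomial.map_pow]
  constructor
  · intro hp
    obtain ⟨u, hu, v, hv, rfl⟩ := Submodule.mem_sup.mp hp
    obtain ⟨w, rfl⟩ := Ideal.mem_span_singleton'.mp hv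
    have hu0 : u.map (Ideal.Quotient.mk J) = 0 := (map_mk_eq_zero_iff J u).mpr hu
    rw [Polynomial.map_add, hu0, zero_add, Polynomial.map_mul, hfmap]
    exact ⟨w.map (Ideal.Quotient.mk J), mul_comm _ _⟩
  · rintro ⟨qq, hqq⟩
    obtain ⟨q, rfl⟩ := Polynomial.map_surjective _ Ideal.Quotient.mk_surjective qq
    have h0 : (p - (X ^ r - C g) * q).map (Ideal.Quotient.mk J) = 0 := by
      rw [Polynomial.map_sub, Polynomial.map_mul, hfmap, ← hqq, sub_self]
    have hmem : p - (X ^ r - C g) * q ∈ Ideal.map (C : A →+* A[X]) J :=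
      (map_mk_eq_zero_iff J _).mp h0
    have : p = (p - (X ^ r - C g) * q) + (X ^ r - C g) * q := by ring
    rw [this]
    exact Submodule.add_mem_sup hmem
      (Ideal.mem_span_singleton'.mpr ⟨q, mul_comm _ _⟩)

lemma nzd_quotient {J : Ideal A} {x : A} (hx : NzdMod J x) :
    ∀ c, Ideal.Quotient.mk J x * c = 0 → c = 0 := by
  intro c hc
  obtain ⟨z, rfl⟩ := Ideal.Quotient.mk_surjective c
  rw [← map_mul, Ideal.Quotient.eq_zero_iff_mem] at hc
  rw [Ideal.Quotient.eq_zero_iff_mem]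
  exact hx z hc

lemma nzdMod_X_sup {J : Ideal A} {g : A} {r : ℕ} (hr : r ≠ 0) (hg : NzdMod J g) :
    NzdMod (Ideal.map (C : A →+* A[X]) J ⊔ Ideal.span {X ^ r - C g}) (X : A[X]) := by
  intro p hp
  rw [mem_sup_iff_dvd_map] at hp ⊢
  rw [Polynomial.map_mul, Polynomial.map_X] at hp
  exact dvd_of_dvd_X_mul hr (nzd_quotient hg) hp

lemma nzdMod_C_sup {J : Ideal A} {g x : A} {r : ℕ} (hr : r ≠ 0) (hx : NzdMod J x) :
    NzdMod (Ideal.map (C : A →+* A[X]) J ⊔ Ideal.span {X ^ r - C g}) (C x : A[X]) := by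
  intro p hp
  rw [mem_sup_iff_dvd_map] at hp ⊢
  rw [Polynomial.map_mul, Polynomial.map_C] at hp
  exact dvd_of_dvd_C_mul hr (nzd_quotient hx) hp

end SupLemmas

section Tower

open MvPolynomial

/-- The ideal generated by `Xⱼʳ - C (h j)` for `j : Fin n`. -/
noncomputable def towerIdeal {A : Type u} [CommRing A] (n r : ℕ) (h : Fin n → A) :
    Ideal (MvPolynomial (Fin n) A) :=
  Ideal.span (Set.range fun j => X j ^ r - MvPolynomial.C (h j))

lemma finSuccEquiv_C' {A : Type u} [CommRing A] (n : ℕ) (a : A) :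
    finSuccEquiv A n (MvPolynomial.C a) = Polynomial.C (MvPolynomial.C a) := by
  simp [finSuccEquiv_apply]

lemma map_towerIdeal_finSuccEquiv {A : Type u} [CommRing A] (n r : ℕ) (h : Fin (n + 1) → A) :
    (towerIdeal (n + 1) r h).map
        (((finSuccEquiv A n).toRingEquiv :
          MvPolynomial (Fin (n + 1)) A →+* Polynomial (MvPolynomial (Fin n) A))) =
      Ideal.map (Polynomial.C : MvPolynomial (Fin n) A →+* _)
          (towerIdeal n r (h ∘ Fin.succ)) ⊔
        Ideal.span {Polynomial.X ^ r - Polynomial.C (MvPolynomial.C (h 0))} := by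
  rw [towerIdeal, Ideal.map_span, towerIdeal, Ideal.map_span, ← Ideal.span_union]
  congr 1
  ext y
  constructor
  · rintro ⟨-, ⟨j, rfl⟩, rfl⟩
    induction j using Fin.cases with
    | zero =>
      exact Or.inr (by simp [map_sub, map_pow, finSuccEquiv_apply])
    | succ j =>
      refine Or.inl ⟨X j ^ r - MvPolynomial.C (h j.succ), ⟨j, rfl⟩, ?_⟩
      symm
      simp [map_sub, map_pow, finSuccEquiv_apply]
  · rintro (⟨-, ⟨j, rfl⟩, rfl⟩ | rfl)
    · exact ⟨X j.succ ^ r - MvPolynomial.C (h j.succ), ⟨j.succ, rfl⟩,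
        by simp [map_sub, map_pow, finSuccEquiv_apply]⟩
    · exact ⟨X 0 ^ r - MvPolynomial.C (h 0), ⟨0, rfl⟩,
        by simp [map_sub, map_pow, finSuccEquiv_apply]⟩

lemma map_towerIdeal_rename {A : Type u} [CommRing A] (n r : ℕ) (h : Fin n → A)
    (e : Fin n ≃ Fin n) :
    (towerIdeal n r h).map
        (((renameEquiv A e).toRingEquiv :
          MvPolynomial (Fin n) A →+* MvPolynomial (Fin n) A)) =
      towerIdeal n r (h ∘ e.symm) := by
  rw [towerIdeal, Ideal.map_span, towerIdeal]
  congr 1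
  ext y
  constructor
  · rintro ⟨-, ⟨j, rfl⟩, rfl⟩
    exact ⟨e j, by simp⟩
  · rintro ⟨j, rfl⟩
    exact ⟨X (e.symm j) ^ r - MvPolynomial.C (h (e.symm j)), ⟨e.symm j, rfl⟩, by simp⟩

lemma C_mul_eq_zero {A : Type*} {σ : Type*} [CommRing A] {x : A}
    (hx : ∀ y, x * y = 0 → y = 0) (p : MvPolynomial σ A)
    (hp : MvPolynomial.C x * p = 0) : p = 0 := by
  ext m
  have := congrArg (MvPolynomial.coeff m) hp
  rw [coeff_C_mul, coeff_zero] at this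
  simpa using hx _ this

lemma nzdMod_C_tower {r : ℕ} (hr : r ≠ 0) (n : ℕ) :
    ∀ {A : Type u} [CommRing A] (h : Fin n → A) (x : A),
      (∀ y, x * y = 0 → y = 0) → NzdMod (towerIdeal n r h) (MvPolynomial.C x) := by
  induction n with
  | zero =>
    intro A _ h x hx p hp
    have hbot : towerIdeal 0 r h = ⊥ := by
      rw [towerIdeal, Set.range_eq_empty, Ideal.span_empty]
    rw [hbot] at hp ⊢
    rw [Ideal.mem_bot] at hp ⊢
    exact C_mul_eq_zero hx p hp
  | succ n ih =>
    intro A _ h x hx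
    apply NzdMod.of_map_equiv (finSuccEquiv A n).toRingEquiv
    rw [map_towerIdeal_finSuccEquiv]
    have he : (finSuccEquiv A n).toRingEquiv (MvPolynomial.C x) =
        Polynomial.C (MvPolynomial.C x) := finSuccEquiv_C' n x
    rw [he]
    exact nzdMod_C_sup hr (ih (h ∘ Fin.succ) x hx)

lemma nzdMod_X_tower {A : Type u} [CommRing A] {r : ℕ} (hr : r ≠ 0) (n : ℕ)
    (h : Fin n → A) (hh : ∀ j y, h j * y = 0 → y = 0) (i : Fin n) :
    NzdMod (towerIdeal n r h) (X i) := by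
  cases n with
  | zero => exact i.elim0
  | succ n =>
    apply NzdMod.of_map_equiv (renameEquiv A (Equiv.swap 0 i)).toRingEquiv
    rw [map_towerIdeal_rename]
    have he : (renameEquiv A (Equiv.swap 0 i)).toRingEquiv (X i) = X (0 : Fin (n + 1)) := by
      simp [Equiv.swap_apply_right]
    rw [he]
    set h' : Fin (n + 1) → A := h ∘ (Equiv.swap 0 i).symm with hh'
    apply NzdMod.of_map_equiv (finSuccEquiv A n).toRingEquiv
    rw [map_towerIdeal_finSuccEquiv]
    have he2 : (finSuccEquiv A n).toRingEquiv (X (0 : Fin (n + 1))) =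
        (Polynomial.X : Polynomial (MvPolynomial (Fin n) A)) := finSuccEquiv_X_zero
    rw [he2]
    exact nzdMod_X_sup hr (nzdMod_C_tower hr n (h' ∘ Fin.succ) (h' 0) (hh _))

end Tower

open MvPolynomial

/-- The variables `a, b, c₀, …, c_N, s₁, s₂, s₃` of the polynomial ring (with `N + 6`
variables) appearing in the proof of Proposition 2.13. -/
inductive CVar (N : ℕ) where
  | a : CVar N
  | b : CVar N
  | c : Fin (N + 1) → CVar N
  | s : Fin 3 → CVar N

/-- The ideal `I₃` generated by `b²·c_N − s₁^r`, `a²·c₀ − s₂^r` and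
`(a+b)²·(c₀ + ⋯ + c_N) − s₃^r`. -/
noncomputable def idealI3 (k : Type*) [Field k] (N r : ℕ) :
    Ideal (MvPolynomial (CVar N) k) :=
  Ideal.span
    { X CVar.b ^ 2 * X (CVar.c (Fin.last N)) - X (CVar.s 0) ^ r,
      X CVar.a ^ 2 * X (CVar.c 0) - X (CVar.s 1) ^ r,
      (X CVar.a + X CVar.b) ^ 2 * (∑ i : Fin (N + 1), X (CVar.c i)) - X (CVar.s 2) ^ r }

/-- Splitting off the `s` variables. -/
def cvarEquiv (N : ℕ) : CVar N ≃ (Fin 3 ⊕ (Fin (N + 1) ⊕ Bool)) where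
  toFun v := match v with
    | .a => .inr (.inr false)
    | .b => .inr (.inr true)
    | .c j => .inr (.inl j)
    | .s m => .inl m
  invFun v := match v with
    | .inl m => .s m
    | .inr (.inl j) => .c j
    | .inr (.inr false) => .a
    | .inr (.inr true) => .b
  left_inv v := by cases v <;> rfl
  right_inv v := by rcases v with m | (j | (_ | _)) <;> rfl

/-- The ring isomorphism isolating the `s` variables. -/
noncomputable def bigEquiv (k : Type*) [Field k] (N : ℕ) :
    MvPolynomial (CVar N) k ≃+*
      MvPolynomial (Fin 3) (MvPolynomial (Fin (N + 1) ⊕ Bool) k) :=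
  ((renameEquiv k (cvarEquiv N)).trans (sumAlgEquiv k (Fin 3) (Fin (N + 1) ⊕ Bool))).toRingEquiv

/-- The three "non-`s`" parts of the generators. -/
noncomputable def hFun (k : Type*) [Field k] (N : ℕ) :
    Fin 3 → MvPolynomial (Fin (N + 1) ⊕ Bool) k :=
  ![X (Sum.inr true) ^ 2 * X (Sum.inl (Fin.last N)),
    X (Sum.inr false) ^ 2 * X (Sum.inl 0),
    (X (Sum.inr false) + X (Sum.inr true)) ^ 2 * ∑ j : Fin (N + 1), X (Sum.inl j)]

lemma map_idealI3 (k : Type*) [Field k] (N r : ℕ) :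
    Ideal.map ((bigEquiv k N : MvPolynomial (CVar N) k →+* MvPolynomial (Fin 3) (MvPolynomial (Fin (N + 1) ⊕ Bool) k))) (idealI3 k N r) =
      towerIdeal 3 r (hFun k N) := by
  rw [idealI3, Ideal.map_span, towerIdeal]
  apply le_antisymm
  · rw [Ideal.span_le]
    rintro y ⟨g, hg, rfl⟩
    simp only [Set.mem_insert_iff, Set.mem_singleton_iff] at hg
    rcases hg with rfl | rfl | rfl
    · have : (bigEquiv k N : MvPolynomial (CVar N) k →+* MvPolynomial (Fin 3) (MvPolynomial (Fin (N + 1) ⊕ Bool) k))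
          (X CVar.b ^ 2 * X (CVar.c (Fin.last N)) - X (CVar.s 0) ^ r) =
          -(X 0 ^ r - MvPolynomial.C (hFun k N 0)) := by
        simp [bigEquiv, cvarEquiv, hFun, sumToIter_Xl, sumToIter_Xr]
      rw [this]
      exact neg_mem (Ideal.subset_span ⟨0, rfl⟩)
    · have : (bigEquiv k N : MvPolynomial (CVar N) k →+* MvPolynomial (Fin 3) (MvPolynomial (Fin (N + 1) ⊕ Bool) k))
          (X CVar.a ^ 2 * X (CVar.c 0) - X (CVar.s 1) ^ r) =
          -(X 1 ^ r - MvPolynomial.C (hFun k N 1)) := by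
        simp [bigEquiv, cvarEquiv, hFun, sumToIter_Xl, sumToIter_Xr]
      rw [this]
      exact neg_mem (Ideal.subset_span ⟨1, rfl⟩)
    · have : (bigEquiv k N : MvPolynomial (CVar N) k →+* MvPolynomial (Fin 3) (MvPolynomial (Fin (N + 1) ⊕ Bool) k))
          ((X CVar.a + X CVar.b) ^ 2 * (∑ i : Fin (N + 1), X (CVar.c i)) -
            X (CVar.s 2) ^ r) =
          -(X 2 ^ r - MvPolynomial.C (hFun k N 2)) := by
        simp [bigEquiv, cvarEquiv, hFun, sumToIter_Xl, sumToIter_Xr]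
      rw [this]
      exact neg_mem (Ideal.subset_span ⟨2, rfl⟩)
  · rw [Ideal.span_le]
    rintro y ⟨j, rfl⟩
    have hmem : ∀ g ∈ ({X CVar.b ^ 2 * X (CVar.c (Fin.last N)) - X (CVar.s 0) ^ r,
        X CVar.a ^ 2 * X (CVar.c 0) - X (CVar.s 1) ^ r,
        (X CVar.a + X CVar.b) ^ 2 * (∑ i : Fin (N + 1), X (CVar.c i)) - X (CVar.s 2) ^ r} :
          Set (MvPolynomial (CVar N) k)),
        (bigEquiv k N : MvPolynomial (CVar N) k →+* MvPolynomial (Fin 3) (MvPolynomial (Fin (N + 1) ⊕ Bool) k)) g ∈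
          Ideal.span ((bigEquiv k N : MvPolynomial (CVar N) k →+* MvPolynomial (Fin 3) (MvPolynomial (Fin (N + 1) ⊕ Bool) k)) ''
            {X CVar.b ^ 2 * X (CVar.c (Fin.last N)) - X (CVar.s 0) ^ r,
              X CVar.a ^ 2 * X (CVar.c 0) - X (CVar.s 1) ^ r,
              (X CVar.a + X CVar.b) ^ 2 * (∑ i : Fin (N + 1), X (CVar.c i)) -
                X (CVar.s 2) ^ r}) :=
      fun g hg => Ideal.subset_span ⟨g, hg, rfl⟩
    fin_cases j
    · show X (0 : Fin 3) ^ r - MvPolynomial.C (hFun k N 0) ∈ _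
      have h0 := hmem _ (Set.mem_insert _ _)
      have : (X 0 ^ r - MvPolynomial.C (hFun k N 0) :
          MvPolynomial (Fin 3) (MvPolynomial (Fin (N + 1) ⊕ Bool) k)) =
          -((bigEquiv k N : MvPolynomial (CVar N) k →+* MvPolynomial (Fin 3) (MvPolynomial (Fin (N + 1) ⊕ Bool) k))
            (X CVar.b ^ 2 * X (CVar.c (Fin.last N)) - X (CVar.s 0) ^ r)) := by
        simp [bigEquiv, cvarEquiv, hFun, sumToIter_Xl, sumToIter_Xr]
      rw [this]
      exact neg_mem h0
    · show X (1 : Fin 3) ^ r - MvPolynomial.C (hFun k N 1) ∈ _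
      have h1 := hmem _ (Set.mem_insert_of_mem _ (Set.mem_insert _ _))
      have : (X 1 ^ r - MvPolynomial.C (hFun k N 1) :
          MvPolynomial (Fin 3) (MvPolynomial (Fin (N + 1) ⊕ Bool) k)) =
          -((bigEquiv k N : MvPolynomial (CVar N) k →+* MvPolynomial (Fin 3) (MvPolynomial (Fin (N + 1) ⊕ Bool) k))
            (X CVar.a ^ 2 * X (CVar.c 0) - X (CVar.s 1) ^ r)) := by
        simp [bigEquiv, cvarEquiv, hFun, sumToIter_Xl, sumToIter_Xr]
      rw [this]
      exact neg_mem h1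
    · show X (2 : Fin 3) ^ r - MvPolynomial.C (hFun k N 2) ∈ _
      have h2 := hmem _ (Set.mem_insert_of_mem _ (Set.mem_insert_of_mem _ rfl))
      have : (X 2 ^ r - MvPolynomial.C (hFun k N 2) :
          MvPolynomial (Fin 3) (MvPolynomial (Fin (N + 1) ⊕ Bool) k)) =
          -((bigEquiv k N : MvPolynomial (CVar N) k →+* MvPolynomial (Fin 3) (MvPolynomial (Fin (N + 1) ⊕ Bool) k))
            ((X CVar.a + X CVar.b) ^ 2 * (∑ i : Fin (N + 1), X (CVar.c i)) -
              X (CVar.s 2) ^ r)) := by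
        simp [bigEquiv, cvarEquiv, hFun, sumToIter_Xl, sumToIter_Xr]
      rw [this]
      exact neg_mem h2

lemma hFun_nzd (k : Type*) [Field k] (N : ℕ) :
    ∀ (j : Fin 3) (y : MvPolynomial (Fin (N + 1) ⊕ Bool) k), hFun k N j * y = 0 → y = 0 := by
  have hne : ∀ j : Fin 3, hFun k N j ≠ 0 := by
    intro j
    fin_cases j
    · exact mul_ne_zero (pow_ne_zero _ (X_ne_zero _)) (X_ne_zero _)
    · exact mul_ne_zero (pow_ne_zero _ (X_ne_zero _)) (X_ne_zero _)
    · refine mul_ne_zero (pow_ne_zero _ ?_) ?_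
      · intro h
        have := congrArg (aeval (fun w : Fin (N + 1) ⊕ Bool =>
          if w = Sum.inr false then (1 : k) else 0)) h
        simp at this
      · intro h
        have := congrArg (aeval (fun w : Fin (N + 1) ⊕ Bool =>
          if w = Sum.inl (0 : Fin (N + 1)) then (1 : k) else 0)) h
        simp [Finset.sum_ite_eq'] at this
  intro j y hy
  rcases mul_eq_zero.mp hy with h | h
  · exact absurd h (hne j)
  · exact h

/-- Each variable `sᵢ` is a nonzerodivisor modulo `I₃`. -/
theorem s_nonzerodivisor_mod_I3 {k : Type*} [Field k] (r d : ℕ) (hr : 2 ≤ r) (hd : 1 ≤ d)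
    (hchar : ¬ (ringChar k ∣ 2 * r * d)) (i : Fin 3)
    (f : MvPolynomial (CVar (r * d - 2)) k)
    (hf : X (CVar.s i) * f ∈ idealI3 k (r * d - 2) r) :
    f ∈ idealI3 k (r * d - 2) r := by
  have hr0 : r ≠ 0 := by omega
  have key : NzdMod (idealI3 k (r * d - 2) r) (X (CVar.s i)) := by
    apply NzdMod.of_map_equiv (bigEquiv k (r * d - 2))
    rw [map_idealI3]
    have he : bigEquiv k (r * d - 2) (X (CVar.s i)) = X i := by
      simp [bigEquiv, cvarEquiv, sumToIter_Xl]
    rw [he]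
    exact nzdMod_X_tower hr0 3 (hFun k (r * d - 2)) (hFun_nzd k (r * d - 2)) i
  exact key f hf
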